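/- (Existence of strong set Shapley equilibria.) For every zero-sum matrix game with vector payoffs there exists a pair (p̄,q̄) ∈ P × Q such that p̄ is minimal, q̄ is maximal, v(p̄,q̄) ∈ Max v_I(p̄) ∩ Min v_II(q̄), and moreover V_I(p̄) ∩ V_II(q̄) ⊆ Max v_I(p̄) ∩ Min v_II(q̄). -/

import Mathlib

open Set

noncomputable section

/-- The mixed-strategy simplex in `ℝ^m`. -/
def simplex (m : ℕ) : Set (Fin m → ℝ) := {p | (∀ i, 0 ≤ p i) ∧ ∑ i, p i = 1}

/-- Expected vector payoff `v(p,q) = Σ_i Σ_j p_i g_{ij} q_j`. -/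
def payoff {K m n : ℕ} (g : Fin m → Fin n → (Fin K → ℝ)) (p : Fin m → ℝ) (q : Fin n → ℝ) :
    Fin K → ℝ := ∑ i, ∑ j, (p i * q j) • g i j

/-- `v_I(p) = {v(p,q) : q ∈ Q}`. -/
def vI {K m n : ℕ} (g : Fin m → Fin n → (Fin K → ℝ)) (p : Fin m → ℝ) : Set (Fin K → ℝ) :=
  {y | ∃ q ∈ simplex n, y = payoff g p q}

/-- `V_I(p) = v_I(p) - ℝ^K_+`. -/
def VI {K m n : ℕ} (g : Fin m → Fin n → (Fin K → ℝ)) (p : Fin m → ℝ) : Set (Fin K → ℝ) :=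
  {y | ∃ z ∈ vI g p, y ≤ z}

/-- `v_II(q) = {v(p,q) : p ∈ P}`. -/
def vII {K m n : ℕ} (g : Fin m → Fin n → (Fin K → ℝ)) (q : Fin n → ℝ) : Set (Fin K → ℝ) :=
  {y | ∃ p ∈ simplex m, y = payoff g p q}

/-- `V_II(q) = v_II(q) + ℝ^K_+`. -/
def VII {K m n : ℕ} (g : Fin m → Fin n → (Fin K → ℝ)) (q : Fin n → ℝ) : Set (Fin K → ℝ) :=
  {y | ∃ z ∈ vII g q, z ≤ y}

/-- Maximal points of a set w.r.t. the componentwise order. -/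
def maxSet {K : ℕ} (A : Set (Fin K → ℝ)) : Set (Fin K → ℝ) :=
  {z ∈ A | ∀ y ∈ A, z ≤ y → y = z}

/-- Minimal points of a set w.r.t. the componentwise order. -/
def minSet {K : ℕ} (A : Set (Fin K → ℝ)) : Set (Fin K → ℝ) :=
  {z ∈ A | ∀ y ∈ A, y ≤ z → y = z}

/-- `p̄` is a minimal strategy for player I: no `p ∈ P` with `V_I(p) ⊆ V_I(p̄)`
and `V_I(p) ≠ V_I(p̄)`. -/
def MinimalStrat {K m n : ℕ} (g : Fin m → Fin n → (Fin K → ℝ)) (pbar : Fin m → ℝ) : Prop :=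
  ∀ p ∈ simplex m, VI g p ⊆ VI g pbar → VI g p = VI g pbar

/-- `q̄` is a maximal strategy for player II: no `q ∈ Q` with `V_II(q) ⊆ V_II(q̄)`
and `V_II(q) ≠ V_II(q̄)`. -/
def MaximalStrat {K m n : ℕ} (g : Fin m → Fin n → (Fin K → ℝ)) (qbar : Fin n → ℝ) : Prop :=
  ∀ q ∈ simplex n, VII g q ⊆ VII g qbar → VII g q = VII g qbar

namespace T4

lemma simplex_eq (d : ℕ) : simplex d = stdSimplex ℝ (Fin d) := rfl

lemma isCompact_simplex (d : ℕ) : IsCompact (simplex d) := isCompact_stdSimplex _ _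

lemma isClosed_simplex (d : ℕ) : IsClosed (simplex d) := isClosed_stdSimplex _ _

lemma single_mem_simplex {d : ℕ} (j : Fin d) : Pi.single j (1:ℝ) ∈ simplex d :=
  single_mem_stdSimplex ℝ j

variable {K m n : ℕ}

lemma payoff_apply (g : Fin m → Fin n → Fin K → ℝ) (p : Fin m → ℝ) (q : Fin n → ℝ) (k : Fin K) :
    payoff g p q k = ∑ i, ∑ j, (p i * q j) * g i j k := by
  simp [payoff, Finset.sum_apply]

lemma payoff_single_q (g : Fin m → Fin n → Fin K → ℝ) (p : Fin m → ℝ) (j : Fin n) (k : Fin K) :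
    payoff g p (Pi.single j 1) k = ∑ i, p i * g i j k := by
  rw [payoff_apply]
  refine Finset.sum_congr rfl fun i _ => ?_
  simp [Pi.single_apply, mul_ite, ite_mul, Finset.sum_ite_eq']

lemma payoff_single_p (g : Fin m → Fin n → Fin K → ℝ) (q : Fin n → ℝ) (i : Fin m) (k : Fin K) :
    payoff g (Pi.single i 1) q k = ∑ j, q j * g i j k := by
  rw [payoff_apply, Finset.sum_comm]
  refine Finset.sum_congr rfl fun j _ => ?_
  simp [Pi.single_apply, mul_ite, ite_mul, Finset.sum_ite_eq']

lemma payoff_eq_sum_q (g : Fin m → Fin n → Fin K → ℝ) (p : Fin m → ℝ) (q : Fin n → ℝ) (k : Fin K) :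
    payoff g p q k = ∑ j, q j * payoff g p (Pi.single j 1) k := by
  conv_lhs => rw [payoff_apply]
  simp only [payoff_single_q, Finset.mul_sum]
  rw [Finset.sum_comm]
  exact Finset.sum_congr rfl fun j _ => Finset.sum_congr rfl fun i _ => by ring

lemma payoff_eq_sum_p (g : Fin m → Fin n → Fin K → ℝ) (p : Fin m → ℝ) (q : Fin n → ℝ) (k : Fin K) :
    payoff g p q k = ∑ i, p i * payoff g (Pi.single i 1) q k := by
  conv_lhs => rw [payoff_apply]
  simp only [payoff_single_p, Finset.mul_sum]
  exact Finset.sum_congr rfl fun i _ => Finset.sum_congr rfl fun j _ => by ring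

lemma payoff_sum_smul (g : Fin m → Fin n → Fin K → ℝ) (p : Fin m → ℝ)
    (c : Fin n → ℝ) (Q : Fin n → (Fin n → ℝ)) :
    payoff g p (fun j' => ∑ t, c t * Q t j') = ∑ t, c t • payoff g p (Q t) := by
  funext k
  rw [payoff_eq_sum_q]
  simp only [Finset.sum_apply, Pi.smul_apply, smul_eq_mul, Finset.sum_mul]
  rw [Finset.sum_comm]
  refine Finset.sum_congr rfl fun t _ => ?_
  rw [payoff_eq_sum_q g p (Q t) k, Finset.mul_sum]
  exact Finset.sum_congr rfl fun j _ => by ring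

lemma payoff_sum_smul_p (g : Fin m → Fin n → Fin K → ℝ) (q : Fin n → ℝ)
    (c : Fin m → ℝ) (P : Fin m → (Fin m → ℝ)) :
    payoff g (fun i' => ∑ t, c t * P t i') q = ∑ t, c t • payoff g (P t) q := by
  funext k
  rw [payoff_eq_sum_p]
  simp only [Finset.sum_apply, Pi.smul_apply, smul_eq_mul, Finset.sum_mul]
  rw [Finset.sum_comm]
  refine Finset.sum_congr rfl fun t _ => ?_
  rw [payoff_eq_sum_p g (P t) q k, Finset.mul_sum]
  exact Finset.sum_congr rfl fun i _ => by ring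

lemma continuous_payoff_q (g : Fin m → Fin n → Fin K → ℝ) (p : Fin m → ℝ) :
    Continuous fun q => payoff g p q := by
  apply continuous_pi
  intro k
  simp only [payoff_apply]
  exact continuous_finset_sum _ fun i _ => continuous_finset_sum _ fun j _ =>
    (continuous_const.mul (continuous_apply j)).mul continuous_const

lemma continuous_payoff_p (g : Fin m → Fin n → Fin K → ℝ) (q : Fin n → ℝ) :
    Continuous fun p => payoff g p q := by
  apply continuous_pi
  intro k
  simp only [payoff_apply]
  exact continuous_finset_sum _ fun i _ => continuous_finset_sum _ fun j _ =>
    ((continuous_apply i).mul continuous_const).mul continuous_const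

end T4

namespace T4

variable {K m n : ℕ}

/-- The lower shadow of the image of the simplex under a continuous map is closed. -/
lemma isClosed_lowerSet {d : ℕ} (f : (Fin d → ℝ) → (Fin K → ℝ)) (hf : Continuous f) :
    IsClosed {y | ∃ x ∈ simplex d, y ≤ f x} := by
  apply IsSeqClosed.isClosed
  intro u y hu huy
  choose q hq hle using hu
  obtain ⟨a, ha, φ, hφ, hta⟩ := (isCompact_simplex d).tendsto_subseq hq
  refine ⟨a, ha, fun k => ?_⟩
  have h1 : Filter.Tendsto (fun t => u (φ t) k) Filter.atTop (nhds (y k)) :=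
    tendsto_pi_nhds.1 (huy.comp hφ.tendsto_atTop) k
  have h2 : Filter.Tendsto (fun t => f (q (φ t)) k) Filter.atTop (nhds (f a k)) :=
    tendsto_pi_nhds.1 ((hf.tendsto a).comp hta) k
  exact le_of_tendsto_of_tendsto' h1 h2 fun t => hle (φ t) k

lemma isClosed_upperSet {d : ℕ} (f : (Fin d → ℝ) → (Fin K → ℝ)) (hf : Continuous f) :
    IsClosed {y | ∃ x ∈ simplex d, f x ≤ y} := by
  apply IsSeqClosed.isClosed
  intro u y hu huy
  choose q hq hle using hu
  obtain ⟨a, ha, φ, hφ, hta⟩ := (isCompact_simplex d).tendsto_subseq hq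
  refine ⟨a, ha, fun k => ?_⟩
  have h1 : Filter.Tendsto (fun t => u (φ t) k) Filter.atTop (nhds (y k)) :=
    tendsto_pi_nhds.1 (huy.comp hφ.tendsto_atTop) k
  have h2 : Filter.Tendsto (fun t => f (q (φ t)) k) Filter.atTop (nhds (f a k)) :=
    tendsto_pi_nhds.1 ((hf.tendsto a).comp hta) k
  exact le_of_tendsto_of_tendsto' h2 h1 fun t => hle (φ t) k

lemma mem_VI_iff (g : Fin m → Fin n → Fin K → ℝ) (p : Fin m → ℝ) (y : Fin K → ℝ) :
    y ∈ VI g p ↔ ∃ q ∈ simplex n, y ≤ payoff g p q := by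
  constructor
  · rintro ⟨z, ⟨q, hq, rfl⟩, hyz⟩; exact ⟨q, hq, hyz⟩
  · rintro ⟨q, hq, h⟩; exact ⟨payoff g p q, ⟨q, hq, rfl⟩, h⟩

lemma mem_VII_iff (g : Fin m → Fin n → Fin K → ℝ) (q : Fin n → ℝ) (y : Fin K → ℝ) :
    y ∈ VII g q ↔ ∃ p ∈ simplex m, payoff g p q ≤ y := by
  constructor
  · rintro ⟨z, ⟨p, hp, rfl⟩, hzy⟩; exact ⟨p, hp, hzy⟩
  · rintro ⟨p, hp, h⟩; exact ⟨payoff g p q, ⟨p, hp, rfl⟩, h⟩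

lemma isClosed_VI (g : Fin m → Fin n → Fin K → ℝ) (p : Fin m → ℝ) : IsClosed (VI g p) := by
  have : VI g p = {y | ∃ q ∈ simplex n, y ≤ payoff g p q} := by
    ext y; exact mem_VI_iff g p y
  rw [this]
  exact isClosed_lowerSet _ (continuous_payoff_q g p)

lemma isClosed_VII (g : Fin m → Fin n → Fin K → ℝ) (q : Fin n → ℝ) : IsClosed (VII g q) := by
  have : VII g q = {y | ∃ p ∈ simplex m, payoff g p q ≤ y} := by
    ext y; exact mem_VII_iff g q y
  rw [this]
  exact isClosed_upperSet _ (continuous_payoff_p g q)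

lemma VI_subset_iff (g : Fin m → Fin n → Fin K → ℝ) (p p' : Fin m → ℝ) :
    VI g p ⊆ VI g p' ↔ ∀ j, payoff g p (Pi.single j 1) ∈ VI g p' := by
  constructor
  · intro h j
    exact h ⟨payoff g p (Pi.single j 1), ⟨Pi.single j 1, single_mem_simplex j, rfl⟩, le_rfl⟩
  · intro h y hy
    rw [mem_VI_iff] at hy
    obtain ⟨q, hq, hyq⟩ := hy
    have h' : ∀ j, ∃ q' ∈ simplex n, payoff g p (Pi.single j 1) ≤ payoff g p' q' := by
      intro j; exact (mem_VI_iff g p' _).1 (h j)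
    choose Qc hQc hle using h'
    refine (mem_VI_iff g p' _).2 ⟨fun j' => ∑ t, q t * Qc t j', ?_, ?_⟩
    · have := (convex_stdSimplex ℝ (Fin n)).sum_mem (t := Finset.univ)
        (fun j _ => hq.1 j) hq.2 (fun j _ => hQc j)
      rw [simplex_eq]
      convert this using 1
      funext j'
      rw [Finset.sum_apply]
      simp [smul_eq_mul]
    · rw [payoff_sum_smul]
      refine le_trans hyq ?_
      intro k
      rw [payoff_eq_sum_q g p q k, Finset.sum_apply]
      refine Finset.sum_le_sum fun j _ => ?_
      simp only [Pi.smul_apply, smul_eq_mul]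
      exact mul_le_mul_of_nonneg_left (hle j k) (hq.1 j)

lemma VII_subset_iff (g : Fin m → Fin n → Fin K → ℝ) (q q' : Fin n → ℝ) :
    VII g q ⊆ VII g q' ↔ ∀ i, payoff g (Pi.single i 1) q ∈ VII g q' := by
  constructor
  · intro h i
    exact h ⟨payoff g (Pi.single i 1) q, ⟨Pi.single i 1, single_mem_simplex i, rfl⟩, le_rfl⟩
  · intro h y hy
    rw [mem_VII_iff] at hy
    obtain ⟨p, hp, hyp⟩ := hy
    have h' : ∀ i, ∃ p' ∈ simplex m, payoff g p' q' ≤ payoff g (Pi.single i 1) q := by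
      intro i; exact (mem_VII_iff g q' _).1 (h i)
    choose Pc hPc hle using h'
    refine (mem_VII_iff g q' _).2 ⟨fun i' => ∑ t, p t * Pc t i', ?_, ?_⟩
    · have := (convex_stdSimplex ℝ (Fin m)).sum_mem (t := Finset.univ)
        (fun i _ => hp.1 i) hp.2 (fun i _ => hPc i)
      rw [simplex_eq]
      convert this using 1
      funext i'
      rw [Finset.sum_apply]
      simp [smul_eq_mul]
    · rw [payoff_sum_smul_p]
      refine le_trans ?_ hyp
      intro k
      rw [payoff_eq_sum_p g p q k, Finset.sum_apply]
      refine Finset.sum_le_sum fun i _ => ?_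
      simp only [Pi.smul_apply, smul_eq_mul]
      exact mul_le_mul_of_nonneg_left (hle i k) (hp.1 i)

/-- Generic Zorn argument producing a strategy whose value set is minimal w.r.t. inclusion. -/
lemma exists_minimal_V {d : ℕ} (V : (Fin d → ℝ) → Set (Fin K → ℝ))
    (hcl : ∀ p' ∈ simplex d, IsClosed {p | p ∈ simplex d ∧ V p ⊆ V p'})
    {p₀ : Fin d → ℝ} (hp₀ : p₀ ∈ simplex d) :
    ∃ pb ∈ simplex d, V pb ⊆ V p₀ ∧ ∀ p ∈ simplex d, V p ⊆ V pb → V p = V pb := by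
  set S : Set (Set (Fin K → ℝ)) := {A | ∃ p, p ∈ simplex d ∧ V p = A ∧ A ⊆ V p₀} with hS
  have hx : V p₀ ∈ S := ⟨p₀, hp₀, rfl, subset_rfl⟩
  have hchain : ∀ c ⊆ S, IsChain (· ⊆ ·) c → c.Nonempty → ∃ lb ∈ S, ∀ s ∈ c, lb ⊆ s := by
    intro c hcS hch hcne
    have hrep : ∀ A ∈ c, ∃ p, p ∈ simplex d ∧ V p = A ∧ A ⊆ V p₀ := fun A hA => hcS hA
    choose rep hrep1 hrep2 hrep3 using hrep
    haveI : Nonempty c := hcne.to_subtype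
    set D : c → Set (Fin d → ℝ) := fun A => {p | p ∈ simplex d ∧ V p ⊆ A.1} with hD
    have hne : ∀ A : c, (D A).Nonempty := by
      rintro ⟨A, hA⟩
      exact ⟨rep A hA, hrep1 A hA, le_of_eq (hrep2 A hA)⟩
    have hclosed : ∀ A : c, IsClosed (D A) := by
      rintro ⟨A, hA⟩
      have h1 := hcl (rep A hA) (hrep1 A hA)
      have : {p | p ∈ simplex d ∧ V p ⊆ V (rep A hA)} = D ⟨A, hA⟩ := by
        rw [hD]; simp only [hrep2 A hA]
      rwa [this] at h1
    have hcomp : ∀ A : c, IsCompact (D A) := fun A =>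
      (isCompact_simplex d).of_isClosed_subset (hclosed A) (fun p hp => hp.1)
    have hdir : Directed (· ⊇ ·) D := by
      rintro ⟨A, hA⟩ ⟨B, hB⟩
      rcases eq_or_ne A B with rfl | hne'
      · exact ⟨⟨A, hA⟩, subset_rfl, subset_rfl⟩
      rcases hch hA hB hne' with h | h
      · exact ⟨⟨A, hA⟩, subset_rfl, fun p hp => ⟨hp.1, hp.2.trans h⟩⟩
      · exact ⟨⟨B, hB⟩, fun p hp => ⟨hp.1, hp.2.trans h⟩, subset_rfl⟩
    obtain ⟨ps, hps⟩ := IsCompact.nonempty_iInter_of_directed_nonempty_isCompact_isClosed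
      D hdir hne hcomp hclosed
    rw [mem_iInter] at hps
    obtain ⟨A₀, hA₀⟩ := hcne
    have hps1 : ps ∈ simplex d := (hps ⟨A₀, hA₀⟩).1
    refine ⟨V ps, ⟨ps, hps1, rfl, ((hps ⟨A₀, hA₀⟩).2).trans (hrep3 A₀ hA₀)⟩, ?_⟩
    intro A hA
    exact (hps ⟨A, hA⟩).2
  obtain ⟨M, hMx, hM⟩ := zorn_superset_nonempty S hchain (V p₀) hx
  obtain ⟨pb, hpb, hVpb, hsub⟩ := hM.prop
  subst hVpb
  refine ⟨pb, hpb, hsub, fun p hp hps => ?_⟩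
  have hmem : V p ∈ S := ⟨p, hp, rfl, hps.trans hsub⟩
  exact subset_antisymm hps (hM.2 hmem hps)

end T4

namespace T4

variable {m n : ℕ}

/-- Scalar bilinear payoff. -/
def sc (b : Fin m → Fin n → ℝ) (p : Fin m → ℝ) (q : Fin n → ℝ) : ℝ :=
  ∑ i, ∑ j, (p i * q j) * b i j

/-- Row value vector: payoffs of each pure row against mixed `q`. -/
def Rv (b : Fin m → Fin n → ℝ) (q : Fin n → ℝ) : Fin m → ℝ := fun i => ∑ j, q j * b i j

/-- Column values against mixed `p`. -/
def Cv (b : Fin m → Fin n → ℝ) (p : Fin m → ℝ) : Fin n → ℝ := fun j => ∑ i, p i * b i j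

lemma sc_eq_rows (b : Fin m → Fin n → ℝ) (p : Fin m → ℝ) (q : Fin n → ℝ) :
    sc b p q = ∑ i, p i * Rv b q i := by
  unfold sc Rv
  refine Finset.sum_congr rfl fun i _ => ?_
  rw [Finset.mul_sum]
  exact Finset.sum_congr rfl fun j _ => by ring

lemma sc_eq_cols (b : Fin m → Fin n → ℝ) (p : Fin m → ℝ) (q : Fin n → ℝ) :
    sc b p q = ∑ j, q j * Cv b p j := by
  unfold sc Cv
  rw [Finset.sum_comm]
  refine Finset.sum_congr rfl fun j _ => ?_
  rw [Finset.mul_sum]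
  exact Finset.sum_congr rfl fun i _ => by ring

lemma comb_ge {d : ℕ} {x : Fin d → ℝ} {w : Fin d → ℝ} (hw : w ∈ simplex d) {c : ℝ}
    (h : ∀ i, c ≤ x i) : c ≤ ∑ i, w i * x i := by
  calc c = ∑ i, w i * c := by rw [← Finset.sum_mul, hw.2, one_mul]
  _ ≤ ∑ i, w i * x i :=
    Finset.sum_le_sum fun i _ => mul_le_mul_of_nonneg_left (h i) (hw.1 i)

lemma comb_le {d : ℕ} {x : Fin d → ℝ} {w : Fin d → ℝ} (hw : w ∈ simplex d) {c : ℝ}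
    (h : ∀ i, x i ≤ c) : ∑ i, w i * x i ≤ c := by
  calc ∑ i, w i * x i ≤ ∑ i, w i * c :=
    Finset.sum_le_sum fun i _ => mul_le_mul_of_nonneg_left (h i) (hw.1 i)
  _ = c := by rw [← Finset.sum_mul, hw.2, one_mul]

lemma Rv_single (b : Fin m → Fin n → ℝ) (j : Fin n) : Rv b (Pi.single j 1) = fun i => b i j := by
  funext i
  simp [Rv, Pi.single_apply, ite_mul, Finset.sum_ite_eq']

/-- Existence of a saddle point (player I minimizes, player II maximizes). -/
lemma exists_saddle (hm : 0 < m) (hn : 0 < n) (b : Fin m → Fin n → ℝ) :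
    ∃ p ∈ simplex m, ∃ q ∈ simplex n,
      (∀ p' ∈ simplex m, sc b p q ≤ sc b p' q) ∧ (∀ q' ∈ simplex n, sc b p q' ≤ sc b p q) := by
  classical
  set W : Set (Fin m → ℝ) := {y | ∃ q ∈ simplex n, y ≤ Rv b q} with hW
  have hRvcont : Continuous (Rv b) := by
    apply continuous_pi
    intro i
    exact continuous_finset_sum _ fun j _ => (continuous_apply j).mul continuous_const
  have hWclosed : IsClosed W := isClosed_lowerSet (Rv b) hRvcont
  have hWconv : Convex ℝ W := by
    rintro y1 ⟨q1, hq1, h1⟩ y2 ⟨q2, hq2, h2⟩ t s ht hs hts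
    refine ⟨t • q1 + s • q2, (convex_stdSimplex ℝ (Fin n)) hq1 hq2 ht hs hts, fun i => ?_⟩
    have : Rv b (t • q1 + s • q2) i = t * Rv b q1 i + s * Rv b q2 i := by
      simp only [Rv, Pi.add_apply, Pi.smul_apply, smul_eq_mul, add_mul, mul_assoc,
        Finset.sum_add_distrib, Finset.mul_sum]
    rw [this]
    simp only [Pi.add_apply, Pi.smul_apply, smul_eq_mul]
    exact add_le_add (mul_le_mul_of_nonneg_left (h1 i) ht) (mul_le_mul_of_nonneg_left (h2 i) hs)
  have q₀mem : Pi.single (⟨0, hn⟩ : Fin n) (1:ℝ) ∈ simplex n := single_mem_simplex _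
  set q₀ : Fin n → ℝ := Pi.single (⟨0, hn⟩ : Fin n) (1:ℝ)
  have hWne : (Rv b q₀) ∈ W := ⟨q₀, q₀mem, le_rfl⟩
  set T : Set ℝ := {c | (fun _ => c : Fin m → ℝ) ∈ W} with hT
  have hTne : T.Nonempty := by
    refine ⟨-∑ i, |Rv b q₀ i|, q₀, q₀mem, fun i => ?_⟩
    show -∑ i', |Rv b q₀ i'| ≤ Rv b q₀ i
    have h1 : |Rv b q₀ i| ≤ ∑ i', |Rv b q₀ i'| :=
      Finset.single_le_sum (f := fun i' => |Rv b q₀ i'|) (fun i' _ => abs_nonneg _)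
        (Finset.mem_univ i)
    have h2 : -|Rv b q₀ i| ≤ Rv b q₀ i := neg_abs_le _
    linarith
  have hTbdd : BddAbove T := by
    refine ⟨∑ j, |b ⟨0, hm⟩ j|, fun c hc => ?_⟩
    obtain ⟨q, hq, hle⟩ := hc
    have h1 : c ≤ ∑ j, q j * b ⟨0, hm⟩ j := hle ⟨0, hm⟩
    have h2 : ∀ j, q j * b ⟨0, hm⟩ j ≤ |b ⟨0, hm⟩ j| := by
      intro j
      have hqj1 : q j ≤ 1 := by
        rw [← hq.2]
        exact Finset.single_le_sum (fun j' _ => hq.1 j') (Finset.mem_univ j)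
      calc q j * b ⟨0, hm⟩ j ≤ q j * |b ⟨0, hm⟩ j| :=
            mul_le_mul_of_nonneg_left (le_abs_self _) (hq.1 j)
        _ ≤ 1 * |b ⟨0, hm⟩ j| := mul_le_mul_of_nonneg_right hqj1 (abs_nonneg _)
        _ = |b ⟨0, hm⟩ j| := one_mul _
    exact h1.trans (Finset.sum_le_sum fun j _ => h2 j)
  have hTclosed : IsClosed T := by
    have : T = (fun c => (fun _ => c : Fin m → ℝ)) ⁻¹' W := rfl
    rw [this]
    exact hWclosed.preimage (continuous_pi fun i => continuous_id)
  set cs : ℝ := sSup T with hcs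
  have hcsT : cs ∈ T := hTclosed.csSup_mem hTne hTbdd
  obtain ⟨qb, hqb, hRqb⟩ := hcsT
  have hRq : ∀ i, cs ≤ Rv b qb i := fun i => hRqb i
  -- approximate minimizing strategies via separation
  have key : ∀ ε : ℝ, 0 < ε → ∃ p ∈ simplex m, ∀ j, Cv b p j < cs + ε := by
    intro ε hε
    have hnot : (fun _ => cs + ε : Fin m → ℝ) ∉ W := by
      intro hmem
      have : cs + ε ≤ cs := le_csSup hTbdd hmem
      linarith
    obtain ⟨f, u, hfu, hux⟩ := geometric_hahn_banach_closed_point hWconv hWclosed hnot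
    set φ : Fin m → ℝ := fun i => f (Pi.single i 1) with hφdef
    have hfy : ∀ y : Fin m → ℝ, f y = ∑ i, y i * φ i := by
      intro y
      have hy : y = ∑ i, y i • (Pi.single i 1 : Fin m → ℝ) := by
        funext k
        rw [Finset.sum_apply]
        simp [Pi.single_apply, mul_ite, Finset.sum_ite_eq]
      conv_lhs => rw [hy]
      rw [map_sum]
      exact Finset.sum_congr rfl fun i _ => by rw [map_smul, smul_eq_mul]
    have hφnn : ∀ i, 0 ≤ φ i := by
      intro i
      by_contra hneg
      push_neg at hneg
      have hw₀ : Rv b qb ∈ W := ⟨qb, hqb, le_rfl⟩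
      have hfw₀ : f (Rv b qb) < u := hfu _ hw₀
      set t : ℝ := (f (Rv b qb) - u) / φ i with htdef
      have ht : 0 < t := div_pos_of_neg_of_neg (by linarith) hneg
      set ei : Fin m → ℝ := Pi.single i 1 with heidef
      have hmem : Rv b qb - t • ei ∈ W := by
        refine ⟨qb, hqb, fun i' => ?_⟩
        show Rv b qb i' - t * ei i' ≤ Rv b qb i'
        have h0 : 0 ≤ t * ei i' := by
          rw [heidef]
          refine mul_nonneg ht.le ?_
          rcases eq_or_ne i' i with rfl | hii
          · simp
          · simp [Pi.single_apply, hii]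
        linarith
      have hlt := hfu _ hmem
      rw [map_sub, map_smul, smul_eq_mul] at hlt
      have hmatch : f ei = φ i := by rw [heidef]
      rw [hmatch, htdef, div_mul_cancel₀ _ (ne_of_lt hneg)] at hlt
      linarith
    -- the functional has positive total mass
    have hs : 0 < ∑ i, φ i := by
      rcases lt_or_eq_of_le (Finset.sum_nonneg fun i _ => hφnn i) with h | h
      · exact h
      · exfalso
        have hzero : ∀ i ∈ Finset.univ, φ i = 0 :=
          (Finset.sum_eq_zero_iff_of_nonneg fun i _ => hφnn i).1 h.symm
        have h1 : f (Rv b qb) = 0 := by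
          rw [hfy]
          exact Finset.sum_eq_zero fun i _ => by rw [hzero i (Finset.mem_univ i), mul_zero]
        have h2 : f (fun _ => cs + ε) = 0 := by
          rw [hfy]
          exact Finset.sum_eq_zero fun i _ => by rw [hzero i (Finset.mem_univ i), mul_zero]
        have h3 := hfu _ (⟨qb, hqb, le_rfl⟩ : Rv b qb ∈ W)
        rw [h1] at h3
        rw [h2] at hux
        linarith
    refine ⟨fun i => φ i / (∑ i', φ i'), ⟨fun i => div_nonneg (hφnn i) hs.le, ?_⟩, ?_⟩
    · rw [← Finset.sum_div, div_self hs.ne']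
    · intro j
      have hcol : (fun i => b i j) ∈ W := ⟨Pi.single j 1, single_mem_simplex j, by
        rw [← Rv_single b j]⟩
      have h1 : f (fun i => b i j) < u := hfu _ hcol
      have h2 : f (fun _ => cs + ε) = (cs + ε) * ∑ i, φ i := by
        rw [hfy, Finset.mul_sum]
      have h3 : Cv b (fun i => φ i / (∑ i', φ i')) j = f (fun i => b i j) / (∑ i', φ i') := by
        rw [hfy]
        unfold Cv
        rw [Finset.sum_div]
        exact Finset.sum_congr rfl fun i _ => by ring
      rw [h3]
      rw [div_lt_iff₀ hs]
      have h4 : u < (cs + ε) * ∑ i, φ i := by rw [← h2]; exact hux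
      linarith
  -- extract the exact minimizing strategy by compactness
  have hCvcont : Continuous fun p => Cv b p := by
    apply continuous_pi
    intro j
    exact continuous_finset_sum _ fun i _ => (continuous_apply i).mul continuous_const
  set Z : ℕ → Set (Fin m → ℝ) :=
    fun k => {p | p ∈ simplex m ∧ ∀ j, Cv b p j ≤ cs + 1 / (k + 1)} with hZ
  have hZclosed : ∀ k, IsClosed (Z k) := by
    intro k
    have : Z k = simplex m ∩ ⋂ j, {p | Cv b p j ≤ cs + 1 / (k + 1)} := by
      ext p
      simp [hZ, mem_iInter, forall_and]
    rw [this]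
    refine (isClosed_simplex m).inter (isClosed_iInter fun j => ?_)
    exact isClosed_le ((continuous_apply j).comp hCvcont) continuous_const
  have hZcomp : ∀ k, IsCompact (Z k) :=
    fun k => (isCompact_simplex m).of_isClosed_subset (hZclosed k) (fun p hp => hp.1)
  have hZne : ∀ k, (Z k).Nonempty := by
    intro k
    have hpos : (0:ℝ) < 1 / (k + 1) := by positivity
    obtain ⟨p, hp, hlt⟩ := key _ hpos
    exact ⟨p, hp, fun j => (hlt j).le⟩
  have hZdir : Directed (· ⊇ ·) Z := by
    intro k l
    refine ⟨max k l, fun p hp => ⟨hp.1, fun j => (hp.2 j).trans (add_le_add_right ?_ cs)⟩,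
      fun p hp => ⟨hp.1, fun j => (hp.2 j).trans (add_le_add_right ?_ cs)⟩⟩
    · refine one_div_le_one_div_of_le (by positivity) ?_
      have : (k:ℝ) ≤ (max k l : ℕ) := by exact_mod_cast Nat.le_max_left k l
      linarith
    · refine one_div_le_one_div_of_le (by positivity) ?_
      have : (l:ℝ) ≤ (max k l : ℕ) := by exact_mod_cast Nat.le_max_right k l
      linarith
  obtain ⟨pb, hpbZ⟩ := IsCompact.nonempty_iInter_of_directed_nonempty_isCompact_isClosed
    Z hZdir hZne hZcomp hZclosed
  rw [mem_iInter] at hpbZ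
  have hpb : pb ∈ simplex m := (hpbZ 0).1
  have hCpb : ∀ j, Cv b pb j ≤ cs := by
    intro j
    by_contra hlt
    push_neg at hlt
    obtain ⟨k, hk⟩ := exists_nat_one_div_lt (sub_pos.2 hlt)
    have := (hpbZ k).2 j
    linarith
  -- conclude the saddle property
  have hval1 : sc b pb qb ≤ cs := by
    rw [sc_eq_cols]
    exact comb_le hqb hCpb
  have hval2 : cs ≤ sc b pb qb := by
    rw [sc_eq_rows]
    exact comb_ge hpb hRq
  refine ⟨pb, hpb, qb, hqb, fun p' hp' => ?_, fun q' hq' => ?_⟩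
  · have : cs ≤ sc b p' qb := by
      rw [sc_eq_rows]
      exact comb_ge hp' hRq
    linarith
  · have : sc b pb q' ≤ cs := by
      rw [sc_eq_cols]
      exact comb_le hq' hCpb
    linarith

end T4

namespace T4

variable {K m n : ℕ}

lemma Fsc (g : Fin m → Fin n → Fin K → ℝ) (p : Fin m → ℝ) (q : Fin n → ℝ) :
    ∑ k, payoff g p q k = sc (fun i j => ∑ k, g i j k) p q := by
  unfold sc
  simp only [payoff_apply]
  rw [Finset.sum_comm]
  refine Finset.sum_congr rfl fun i _ => ?_
  rw [Finset.sum_comm]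
  refine Finset.sum_congr rfl fun j _ => ?_
  rw [Finset.mul_sum]

lemma le_sum_eq {x y : Fin K → ℝ} (h : x ≤ y) (h2 : ∑ k, y k ≤ ∑ k, x k) : y = x := by
  funext k
  by_contra hne
  have hlt : x k < y k := lt_of_le_of_ne (h k) (Ne.symm hne)
  have := Finset.sum_lt_sum (fun k (_ : k ∈ Finset.univ) => h k)
    ⟨k, Finset.mem_univ k, hlt⟩
  linarith

lemma sum_le_sum_of_le {x y : Fin K → ℝ} (h : x ≤ y) : ∑ k, x k ≤ ∑ k, y k :=
  Finset.sum_le_sum fun k _ => h k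

end T4

theorem T4.main {K m n : ℕ} (hK : 0 < K) (hm : 0 < m) (hn : 0 < n)
    (g : Fin m → Fin n → (Fin K → ℝ)) :
    ∃ pbar ∈ simplex m, ∃ qbar ∈ simplex n,
      MinimalStrat g pbar ∧ MaximalStrat g qbar ∧
      payoff g pbar qbar ∈ maxSet (vI g pbar) ∩ minSet (vII g qbar) ∧
      VI g pbar ∩ VII g qbar ⊆ maxSet (vI g pbar) ∩ minSet (vII g qbar) := by
  classical
  set a : Fin m → Fin n → ℝ := fun i j => ∑ k, g i j k with ha
  obtain ⟨p₀, hp₀, q₀, hq₀, hL₀, hR₀⟩ := T4.exists_saddle hm hn a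
  have hF : ∀ (p : Fin m → ℝ) (q : Fin n → ℝ), ∑ k, payoff g p q k = T4.sc a p q :=
    fun p q => T4.Fsc g p q
  -- refine p₀ to a minimal strategy
  have hclP : ∀ p' ∈ simplex m, IsClosed {p | p ∈ simplex m ∧ VI g p ⊆ VI g p'} := by
    intro p' _
    have h : {p | p ∈ simplex m ∧ VI g p ⊆ VI g p'} =
        simplex m ∩ ⋂ j, (fun p => payoff g p (Pi.single j 1)) ⁻¹' (VI g p') := by
      ext p
      simp only [Set.mem_inter_iff, Set.mem_iInter, Set.mem_setOf_eq, Set.mem_preimage]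
      exact and_congr_right fun _ => T4.VI_subset_iff g p p'
    rw [h]
    exact (T4.isClosed_simplex m).inter (isClosed_iInter fun j =>
      (T4.isClosed_VI g p').preimage (T4.continuous_payoff_p g (Pi.single j 1)))
  obtain ⟨pbar, hpbar, hVIsub, hMinP⟩ := T4.exists_minimal_V (VI g) hclP hp₀
  -- refine q₀ to a maximal strategy
  have hclQ : ∀ q' ∈ simplex n, IsClosed {q | q ∈ simplex n ∧ VII g q ⊆ VII g q'} := by
    intro q' _
    have h : {q | q ∈ simplex n ∧ VII g q ⊆ VII g q'} =
        simplex n ∩ ⋂ i, (fun q => payoff g (Pi.single i 1) q) ⁻¹' (VII g q') := by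
      ext q
      simp only [Set.mem_inter_iff, Set.mem_iInter, Set.mem_setOf_eq, Set.mem_preimage]
      exact and_congr_right fun _ => T4.VII_subset_iff g q q'
    rw [h]
    exact (T4.isClosed_simplex n).inter (isClosed_iInter fun i =>
      (T4.isClosed_VII g q').preimage (T4.continuous_payoff_q g (Pi.single i 1)))
  obtain ⟨qbar, hqbar, hVIIsub, hMaxQ⟩ := T4.exists_minimal_V (VII g) hclQ hq₀
  -- the pair (pbar, q₀) is still a saddle point
  have h1 : payoff g pbar q₀ ∈ VI g p₀ :=
    hVIsub ⟨payoff g pbar q₀, ⟨q₀, hq₀, rfl⟩, le_rfl⟩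
  obtain ⟨q₁, hq₁, hle₁⟩ := (T4.mem_VI_iff g p₀ _).1 h1
  have e1 : T4.sc a pbar q₀ ≤ T4.sc a p₀ q₁ := by
    rw [← hF, ← hF]; exact T4.sum_le_sum_of_le hle₁
  have hveq : T4.sc a pbar q₀ = T4.sc a p₀ q₀ :=
    le_antisymm (e1.trans (hR₀ q₁ hq₁)) (hL₀ pbar hpbar)
  have hL₁ : ∀ p' ∈ simplex m, T4.sc a pbar q₀ ≤ T4.sc a p' q₀ := by
    intro p' hp'; rw [hveq]; exact hL₀ p' hp'
  have hR₁ : ∀ q' ∈ simplex n, T4.sc a pbar q' ≤ T4.sc a pbar q₀ := by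
    intro q' hq'
    have h2 : payoff g pbar q' ∈ VI g p₀ := hVIsub ⟨_, ⟨q', hq', rfl⟩, le_rfl⟩
    obtain ⟨q₂, hq₂, hle₂⟩ := (T4.mem_VI_iff g p₀ _).1 h2
    have e2 : T4.sc a pbar q' ≤ T4.sc a p₀ q₂ := by
      rw [← hF, ← hF]; exact T4.sum_le_sum_of_le hle₂
    calc T4.sc a pbar q' ≤ T4.sc a p₀ q₂ := e2
      _ ≤ T4.sc a p₀ q₀ := hR₀ q₂ hq₂
      _ = T4.sc a pbar q₀ := hveq.symm
  -- the pair (pbar, qbar) is still a saddle point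
  have h3 : payoff g pbar qbar ∈ VII g q₀ := hVIIsub ⟨_, ⟨pbar, hpbar, rfl⟩, le_rfl⟩
  obtain ⟨p₂, hp₂, hle₃⟩ := (T4.mem_VII_iff g q₀ _).1 h3
  have e3 : T4.sc a p₂ q₀ ≤ T4.sc a pbar qbar := by
    rw [← hF, ← hF]; exact T4.sum_le_sum_of_le hle₃
  have hveq2 : T4.sc a pbar qbar = T4.sc a pbar q₀ :=
    le_antisymm (hR₁ qbar hqbar) ((hL₁ p₂ hp₂).trans e3)
  have hL₂ : ∀ p' ∈ simplex m, T4.sc a pbar qbar ≤ T4.sc a p' qbar := by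
    intro p' hp'
    have h4 : payoff g p' qbar ∈ VII g q₀ := hVIIsub ⟨_, ⟨p', hp', rfl⟩, le_rfl⟩
    obtain ⟨p₃, hp₃, hle₄⟩ := (T4.mem_VII_iff g q₀ _).1 h4
    have e4 : T4.sc a p₃ q₀ ≤ T4.sc a p' qbar := by
      rw [← hF, ← hF]; exact T4.sum_le_sum_of_le hle₄
    calc T4.sc a pbar qbar = T4.sc a pbar q₀ := hveq2
      _ ≤ T4.sc a p₃ q₀ := hL₁ p₃ hp₃
      _ ≤ T4.sc a p' qbar := e4
  have hR₂ : ∀ q' ∈ simplex n, T4.sc a pbar q' ≤ T4.sc a pbar qbar := by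
    intro q' hq'
    rw [hveq2]
    exact hR₁ q' hq'
  -- main inclusion
  have main : VI g pbar ∩ VII g qbar ⊆ maxSet (vI g pbar) ∩ minSet (vII g qbar) := by
    rintro x ⟨hx1, hx2⟩
    obtain ⟨q1, hq1, hxq⟩ := (T4.mem_VI_iff g pbar x).1 hx1
    obtain ⟨p1, hp1, hpx⟩ := (T4.mem_VII_iff g qbar x).1 hx2
    have c1 : T4.sc a pbar qbar ≤ T4.sc a p1 qbar := hL₂ p1 hp1
    have c2 : T4.sc a p1 qbar ≤ ∑ k, x k := by
      rw [← hF]; exact T4.sum_le_sum_of_le hpx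
    have c3 : ∑ k, x k ≤ T4.sc a pbar q1 := by
      rw [← hF]; exact T4.sum_le_sum_of_le hxq
    have c4 : T4.sc a pbar q1 ≤ T4.sc a pbar qbar := hR₂ q1 hq1
    have hx_eq1 : payoff g pbar q1 = x := by
      apply T4.le_sum_eq hxq
      rw [hF]
      linarith
    have hx_eq2 : x = payoff g p1 qbar := by
      apply T4.le_sum_eq hpx
      rw [hF]
      linarith
    refine ⟨⟨⟨q1, hq1, hx_eq1.symm⟩, ?_⟩, ⟨⟨p1, hp1, hx_eq2⟩, ?_⟩⟩
    · rintro y ⟨q2, hq2, rfl⟩ hxy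
      apply T4.le_sum_eq hxy
      rw [hF]
      have h5 := hR₂ q2 hq2
      linarith
    · rintro y ⟨p2, hp2, rfl⟩ hyx
      refine (T4.le_sum_eq hyx ?_).symm
      rw [hF]
      have h6 := hL₂ p2 hp2
      linarith
  have hmem : payoff g pbar qbar ∈ VI g pbar ∩ VII g qbar :=
    ⟨⟨payoff g pbar qbar, ⟨qbar, hqbar, rfl⟩, le_rfl⟩,
     ⟨payoff g pbar qbar, ⟨pbar, hpbar, rfl⟩, le_rfl⟩⟩
  exact ⟨pbar, hpbar, qbar, hqbar, hMinP, hMaxQ, main hmem, main⟩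


theorem stmt4 {K m n : ℕ} (hK : 0 < K) (hm : 0 < m) (hn : 0 < n)
    (g : Fin m → Fin n → (Fin K → ℝ)) :
    ∃ pbar ∈ simplex m, ∃ qbar ∈ simplex n,
      MinimalStrat g pbar ∧ MaximalStrat g qbar ∧
      payoff g pbar qbar ∈ maxSet (vI g pbar) ∩ minSet (vII g qbar) ∧
      VI g pbar ∩ VII g qbar ⊆ maxSet (vI g pbar) ∩ minSet (vII g qbar) := T4.main hK hm hn g
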